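/- arXiv:1709.01119 — 4 statements merged into one kernel-verified Lean document; each statement's English description precedes it below -/
import Mathlib

section
/- Let X be a metric space with asymptotic property C. Then for any coarse embedding f : Z → X of a metric space Z into X, the space Z has asymptotic property C. -/
open Filter

/-- A family of subsets of a metric space is `r`-disjoint if points in distinct
members are at distance `> r`. -/
def RDisjoint {X : Type*} [MetricSpace X] (r : ℝ) (𝒰 : Set (Set X)) : Prop :=
  ∀ U ∈ 𝒰, ∀ V ∈ 𝒰, U ≠ V → ∀ x ∈ U, ∀ y ∈ V, r < dist x y

/-- Asymptotic property C: for every sequence of positive reals `R` there are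
finitely many `Rᵢ`-disjoint families, uniformly bounded, covering `X`. -/
def APC (X : Type*) [MetricSpace X] : Prop :=
  ∀ R : ℕ → ℝ, (∀ i, 0 < R i) →
    ∃ (n : ℕ) (𝒰 : Fin n → Set (Set X)) (D : ℝ),
      (∀ i : Fin n, RDisjoint (R i.val) (𝒰 i)) ∧
      (∀ x : X, ∃ i, ∃ U ∈ 𝒰 i, x ∈ U) ∧
      (∀ i, ∀ U ∈ 𝒰 i, ∀ x ∈ U, ∀ y ∈ U, dist x y ≤ D)

/-- Asymptotic property C pulls back along coarse embeddings. -/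
theorem apc_of_coarse_embedding
    {X Z : Type*} [MetricSpace X] [MetricSpace Z]
    (hX : APC X) (f : Z → X) (ρ₁ ρ₂ : ℝ → ℝ)
    (hρ₁mono : Monotone ρ₁) (hρ₂mono : Monotone ρ₂)
    (hρ₁proper : Tendsto ρ₁ atTop atTop)
    (hlower : ∀ z z' : Z, ρ₁ (dist z z') ≤ dist (f z) (f z'))
    (hupper : ∀ z z' : Z, dist (f z) (f z') ≤ ρ₂ (dist z z')) :
    APC Z := by
  intro R hR
  set S : ℕ → ℝ := fun i => max (ρ₂ (R i)) 1 with hS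
  obtain ⟨n, 𝒰, D, hdisj, hcov, hbd⟩ :=
    hX S (fun i => lt_of_lt_of_le one_pos (le_max_right _ _))
  obtain ⟨B, hB⟩ := eventually_atTop.mp (hρ₁proper.eventually_ge_atTop (D + 1))
  refine ⟨n, fun i => (fun U => f ⁻¹' U) '' 𝒰 i, B, ?_, ?_, ?_⟩
  · intro i U hU V hV hUV x hx y hy
    obtain ⟨U', hU', rfl⟩ := hU
    obtain ⟨V', hV', rfl⟩ := hV
    have hne : U' ≠ V' := fun h => hUV (by rw [h])
    have h1 : S i.val < dist (f x) (f y) := hdisj i U' hU' V' hV' hne _ hx _ hy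
    by_contra hle
    push_neg at hle
    have : dist (f x) (f y) ≤ S i.val :=
      le_trans (hupper x y) (le_trans (hρ₂mono hle) (le_max_left _ _))
    linarith
  · intro z
    obtain ⟨i, U, hU, hz⟩ := hcov (f z)
    exact ⟨i, f ⁻¹' U, ⟨U, hU, rfl⟩, hz⟩
  · intro i U hU x hx y hy
    obtain ⟨U', hU', rfl⟩ := hU
    by_contra hgt
    push_neg at hgt
    have h1 : D + 1 ≤ ρ₁ (dist x y) := hB _ (le_of_lt hgt)
    have h2 : dist (f x) (f y) ≤ D := hbd i U' hU' _ hx _ hy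
    linarith [hlower x y]
end

section
/- Let X be a discrete metric space of bounded geometry such that for every R, ε > 0 there exist k ∈ ℕ, Rᵢ-disjoint families 𝒰₁,…,𝒰ₖ with ⋃ᵢ𝒰ᵢ covering X (for appropriate Rᵢ depending on R, ε), where every member U of every 𝒰ᵢ is bounded. Then X has property A. In particular, every metric space with asymptotic property C and bounded geometry has property A. -/
noncomputable instance : Fact ((1:ENNReal) ≤ 1) := ⟨le_rfl⟩

open Metric

/-- Bounded geometry: balls of each radius have uniformly bounded cardinality. -/
def BoundedGeometry (X : Type*) [MetricSpace X] : Prop :=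
  ∀ r > (0:ℝ), ∃ N : ℕ, ∀ x : X, (ball x r).Finite ∧ (ball x r).ncard < N

/-- Yu's property A. -/
def PropertyA (X : Type*) [MetricSpace X] : Prop :=
  ∀ R > (0:ℝ), ∀ ε > (0:ℝ), ∃ ξ : X → lp (fun _ : X => ℝ) 1,
    (∀ x, ‖ξ x‖ = 1) ∧
    (∀ x₁ x₂ : X, dist x₁ x₂ ≤ R → ‖ξ x₁ - ξ x₂‖ ≤ ε) ∧
    (∃ S > (0:ℝ), ∀ x : X,
      Function.support (fun y : X => ξ x y) ⊆ closedBall x S)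

section Aux

variable {X : Type*} [MetricSpace X]

/-- Bump function for a set `U` at scale `M`. -/
noncomputable def phi (M : ℝ) (U : Set X) (x : X) : ℝ :=
  max 0 (1 - Metric.infDist x U / M)

lemma phi_nonneg (M : ℝ) (U : Set X) (x : X) : 0 ≤ phi M U x := le_max_left _ _

lemma phi_of_mem (M : ℝ) {U : Set X} {x : X} (h : x ∈ U) : phi M U x = 1 := by
  simp [phi, Metric.infDist_zero_of_mem h]

lemma infDist_lt_of_phi_pos {M : ℝ} (hM : 0 < M) {U : Set X} {x : X}
    (h : 0 < phi M U x) : Metric.infDist x U < M := by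
  rcases lt_max_iff.1 h with h' | h'
  · exact absurd h' (lt_irrefl 0)
  · have : Metric.infDist x U / M < 1 := by linarith
    exact (div_lt_one hM).1 this

lemma phi_lip {M : ℝ} (hM : 0 < M) (U : Set X) (x y : X) :
    |phi M U x - phi M U y| ≤ dist x y / M := by
  have h2 : Metric.infDist x U ≤ Metric.infDist y U + dist x y :=
    Metric.infDist_le_infDist_add_dist
  have h3 : Metric.infDist y U ≤ Metric.infDist x U + dist x y := by
    have := Metric.infDist_le_infDist_add_dist (x := y) (y := x) (s := U)
    rwa [dist_comm y x] at this
  have habs : |Metric.infDist y U - Metric.infDist x U| ≤ dist x y :=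
    abs_le.2 ⟨by linarith, by linarith⟩
  have h1 : |(1 - Metric.infDist x U / M) - (1 - Metric.infDist y U / M)|
      ≤ dist x y / M := by
    rw [show (1 - Metric.infDist x U / M) - (1 - Metric.infDist y U / M)
        = (Metric.infDist y U - Metric.infDist x U) / M from by ring,
      abs_div, abs_of_pos hM]
    gcongr
  calc |phi M U x - phi M U y| = |max (1 - Metric.infDist x U / M) 0
        - max (1 - Metric.infDist y U / M) 0| := by
        rw [phi, phi, max_comm, max_comm 0]
    _ ≤ |(1 - Metric.infDist x U / M) - (1 - Metric.infDist y U / M)| :=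
        abs_max_sub_max_le_abs _ _ _
    _ ≤ dist x y / M := h1

/-- The proposition that some nonempty set of the family `𝒱` has positive bump
value at `x`. -/
def PickP (𝒱 : Set (Set X)) (M : ℝ) (x : X) : Prop :=
  ∃ U, (U ∈ 𝒱 ∧ U.Nonempty) ∧ 0 < phi M U x

/-- The chosen set of the family `𝒱` with positive bump value at `x`. -/
noncomputable def pickU (𝒱 : Set (Set X)) (M : ℝ) (x : X) : Set X := by
  classical exact if h : PickP 𝒱 M x then h.choose else ∅

lemma pickU_spec {𝒱 : Set (Set X)} {M : ℝ} {x : X} (h : PickP 𝒱 M x) :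
    (pickU 𝒱 M x ∈ 𝒱 ∧ (pickU 𝒱 M x).Nonempty) ∧ 0 < phi M (pickU 𝒱 M x) x := by
  classical
  rw [pickU]
  simp only [dif_pos h]
  exact h.choose_spec

lemma pickU_of_not_pick {𝒱 : Set (Set X)} {M : ℝ} {x : X} (h : ¬ PickP 𝒱 M x) :
    pickU 𝒱 M x = ∅ := by
  classical
  rw [pickU]
  simp only [dif_neg h]

/-- The coefficient function. -/
noncomputable def coefA (𝒱 : Set (Set X)) (M : ℝ) (x : X) : ℝ := by
  classical exact if PickP 𝒱 M x then phi M (pickU 𝒱 M x) x else 0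

lemma coefA_of_pick {𝒱 : Set (Set X)} {M : ℝ} {x : X} (h : PickP 𝒱 M x) :
    coefA 𝒱 M x = phi M (pickU 𝒱 M x) x := by
  classical rw [coefA]; simp only [if_pos h]

lemma coefA_of_not_pick {𝒱 : Set (Set X)} {M : ℝ} {x : X} (h : ¬ PickP 𝒱 M x) :
    coefA 𝒱 M x = 0 := by
  classical rw [coefA]; simp only [if_neg h]

lemma coefA_nonneg (𝒱 : Set (Set X)) (M : ℝ) (x : X) : 0 ≤ coefA 𝒱 M x := by
  classical
  rw [coefA]
  split
  · exact phi_nonneg _ _ _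
  · exact le_refl 0

/-- A choice of point in a set. -/
noncomputable def ctr [Nonempty X] (U : Set X) : X := by
  classical exact if h : U.Nonempty then h.some else Classical.arbitrary X

lemma ctr_mem [Nonempty X] {U : Set X} (h : U.Nonempty) : ctr U ∈ U := by
  classical
  rw [ctr]
  simp only [dif_pos h]
  exact h.some_mem

lemma lp_single_sub [DecidableEq X] (c : X) (a b : ℝ) :
    (lp.single 1 c a : lp (fun _ : X => ℝ) 1) - lp.single 1 c b
      = lp.single 1 c (a - b) := by
  classical
  apply lp.ext
  funext j
  rw [lp.coeFn_sub, Pi.sub_apply]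
  by_cases hj : j = c
  · subst hj
    rw [lp.single_apply_self, lp.single_apply_self, lp.single_apply_self]
  · rw [lp.single_apply_ne _ _ _ hj, lp.single_apply_ne _ _ _ hj,
      lp.single_apply_ne _ _ _ hj, sub_zero]

lemma lp_norm_single [DecidableEq X] (c : X) (a : ℝ) :
    ‖(lp.single 1 c a : lp (fun _ : X => ℝ) 1)‖ = |a| := by
  classical
  have hp : 0 < (1 : ENNReal).toReal := by
    rw [ENNReal.toReal_one]; exact one_pos
  simpa using lp.norm_single hp (fun _ : X => a) c

lemma lp_single_apply [DecidableEq X] (c : X) (a : ℝ) (j : X) :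
    (lp.single 1 c a : lp (fun _ : X => ℝ) 1) j = if j = c then a else 0 := by
  classical
  by_cases hj : j = c
  · subst hj; rw [lp.single_apply_self, if_pos rfl]
  · rw [lp.single_apply_ne _ _ _ hj, if_neg hj]

/-- Normalization is `2`-Lipschitz on vectors of norm at least `1`. -/
lemma norm_normalize_sub {E : Type*} [NormedAddCommGroup E] [NormedSpace ℝ E]
    (u v : E) (hu : 1 ≤ ‖u‖) (hv : 1 ≤ ‖v‖) :
    ‖‖u‖⁻¹ • u - ‖v‖⁻¹ • v‖ ≤ 2 * ‖u - v‖ := by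
  have hu0 : 0 < ‖u‖ := lt_of_lt_of_le one_pos hu
  have hv0 : 0 < ‖v‖ := lt_of_lt_of_le one_pos hv
  have key : ‖u‖⁻¹ • u - ‖v‖⁻¹ • v
      = ‖u‖⁻¹ • (u - v) + (‖u‖⁻¹ - ‖v‖⁻¹) • v := by
    rw [smul_sub, sub_smul]
    abel
  rw [key]
  have h1 : ‖‖u‖⁻¹ • (u - v)‖ ≤ ‖u - v‖ := by
    rw [norm_smul, norm_inv, norm_norm, inv_mul_le_iff₀ hu0]
    nlinarith [norm_nonneg (u - v)]
  have h2 : ‖(‖u‖⁻¹ - ‖v‖⁻¹) • v‖ ≤ ‖u - v‖ := by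
    rw [norm_smul]
    have habs : ‖(‖u‖⁻¹ - ‖v‖⁻¹ : ℝ)‖ = |‖v‖ - ‖u‖| / (‖u‖ * ‖v‖) := by
      rw [Real.norm_eq_abs, show ‖u‖⁻¹ - ‖v‖⁻¹ = (‖v‖ - ‖u‖) / (‖u‖ * ‖v‖) from by
        field_simp]
      rw [abs_div, abs_of_pos (mul_pos hu0 hv0)]
    rw [habs]
    have hnn : |‖v‖ - ‖u‖| ≤ ‖u - v‖ := by
      rw [norm_sub_rev u v]
      exact abs_norm_sub_norm_le v u
    calc |‖v‖ - ‖u‖| / (‖u‖ * ‖v‖) * ‖v‖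
        = |‖v‖ - ‖u‖| / ‖u‖ := by field_simp
      _ ≤ |‖v‖ - ‖u‖| := by
          rw [div_le_iff₀ hu0]
          nlinarith [abs_nonneg (‖v‖ - ‖u‖)]
      _ ≤ ‖u - v‖ := hnn
  calc ‖‖u‖⁻¹ • (u - v) + (‖u‖⁻¹ - ‖v‖⁻¹) • v‖
      ≤ ‖‖u‖⁻¹ • (u - v)‖ + ‖(‖u‖⁻¹ - ‖v‖⁻¹) • v‖ := norm_add_le _ _
    _ ≤ ‖u - v‖ + ‖u - v‖ := add_le_add h1 h2
    _ = 2 * ‖u - v‖ := by ring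

end Aux

/-- A discrete metric space with bounded geometry and asymptotic property C
has property A. -/
theorem propertyA_of_apc {X : Type*} [MetricSpace X]
    (hbg : BoundedGeometry X) (hapc : APC X) : PropertyA X := by
  intro R hR ε hε
  classical
  rcases isEmpty_or_nonempty X with hX | hX
  · exact ⟨fun _ => 0, fun x => isEmptyElim x, fun x _ _ => isEmptyElim x,
      1, one_pos, fun x => isEmptyElim x⟩
  -- scales
  set C : ℝ := 16 * R / ε with hCdef
  have hC : 0 < C := by positivity
  set M : ℕ → ℝ := fun j => C * 2 ^ j with hMdef
  have hM : ∀ j, 0 < M j := fun j => by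
    simp only [hMdef]; positivity
  obtain ⟨n, 𝒰, D, hdisj, hcov, hbound⟩ := hapc (fun j => 2 * M j)
    (fun j => by show (0:ℝ) < 2 * M j; linarith [hM j])
  -- uniqueness of positive bump set within a family
  have huniq : ∀ (i : Fin n) (x : X) (U V : Set X), U ∈ 𝒰 i → V ∈ 𝒰 i →
      U.Nonempty → V.Nonempty → 0 < phi (M i.val) U x → 0 < phi (M i.val) V x →
      U = V := by
    intro i x U V hU hV hUne hVne hpU hpV
    by_contra hne
    obtain ⟨u, hu, hdu⟩ := (Metric.infDist_lt_iff hUne).1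
      (infDist_lt_of_phi_pos (hM i.val) hpU)
    obtain ⟨vv, hvv, hdv⟩ := (Metric.infDist_lt_iff hVne).1
      (infDist_lt_of_phi_pos (hM i.val) hpV)
    have hgt : 2 * M i.val < dist u vv := hdisj i U hU V hV hne u hu vv hvv
    have htri : dist u vv ≤ dist u x + dist x vv := dist_triangle u x vv
    rw [dist_comm u x] at htri
    linarith
  have hpick_eq : ∀ (i : Fin n) (x : X) (U : Set X), U ∈ 𝒰 i → U.Nonempty →
      0 < phi (M i.val) U x → pickU (𝒰 i) (M i.val) x = U := by
    intro i x U hU hne hpos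
    have h : PickP (𝒰 i) (M i.val) x := ⟨U, ⟨hU, hne⟩, hpos⟩
    obtain ⟨⟨hmem, hne'⟩, hpos'⟩ := pickU_spec h
    exact huniq i x _ U hmem hU hne' hne hpos' hpos
  -- the vectors
  set a : Fin n → X → ℝ := fun i x => coefA (𝒰 i) (M i.val) x with hadef
  set c : Fin n → X → X := fun i x => ctr (pickU (𝒰 i) (M i.val) x) with hcdef
  set w : Fin n → X → lp (fun _ : X => ℝ) 1 :=
    fun i x => lp.single 1 (c i x) (a i x) with hwdef
  set v : X → lp (fun _ : X => ℝ) 1 := fun x => ∑ i : Fin n, w i x with hvdef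
  have hv_apply : ∀ (x y : X),
      (v x : ∀ _ : X, ℝ) y = ∑ i : Fin n, (w i x : ∀ _ : X, ℝ) y := by
    intro x y
    simp only [hvdef, lp.coeFn_sum, Finset.sum_apply]
  have hw_apply : ∀ (i : Fin n) (x y : X),
      (w i x : ∀ _ : X, ℝ) y = if y = c i x then a i x else 0 := by
    intro i x y
    simp only [hwdef]
    exact lp_single_apply _ _ _
  have hw_apply_nonneg : ∀ (i : Fin n) (x y : X), 0 ≤ (w i x : ∀ _ : X, ℝ) y := by
    intro i x y
    rw [hw_apply]
    split
    · simp only [hadef]; exact coefA_nonneg _ _ _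
    · exact le_refl 0
  -- norm lower bound
  have hv1 : ∀ x : X, 1 ≤ ‖v x‖ := by
    intro x
    obtain ⟨i₀, U, hU, hxU⟩ := hcov x
    have hUne : U.Nonempty := ⟨x, hxU⟩
    have hφ1 : phi (M i₀.val) U x = 1 := phi_of_mem _ hxU
    have hpos : 0 < phi (M i₀.val) U x := by rw [hφ1]; exact one_pos
    have hP : PickP (𝒰 i₀) (M i₀.val) x := ⟨U, ⟨hU, hUne⟩, hpos⟩
    have ha1 : a i₀ x = 1 := by
      simp only [hadef]
      rw [coefA_of_pick hP, hpick_eq i₀ x U hU hUne hpos, hφ1]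
    have hvy : 1 ≤ (v x : ∀ _ : X, ℝ) (c i₀ x) := by
      rw [hv_apply]
      have h1 : (w i₀ x : ∀ _ : X, ℝ) (c i₀ x) = 1 := by
        rw [hw_apply, if_pos rfl, ha1]
      calc (1:ℝ) = (w i₀ x : ∀ _ : X, ℝ) (c i₀ x) := h1.symm
        _ ≤ ∑ i : Fin n, (w i x : ∀ _ : X, ℝ) (c i₀ x) :=
            Finset.single_le_sum (fun i _ => hw_apply_nonneg i x (c i₀ x))
              (Finset.mem_univ i₀)
    calc (1:ℝ) ≤ (v x : ∀ _ : X, ℝ) (c i₀ x) := hvy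
      _ ≤ ‖(v x : ∀ _ : X, ℝ) (c i₀ x)‖ := le_abs_self _
      _ ≤ ‖v x‖ := lp.norm_apply_le_norm one_ne_zero (v x) (c i₀ x)
  -- coefficient estimate when the chosen sets do not match
  have ha_le : ∀ (i : Fin n) (x y : X),
      ¬ (PickP (𝒰 i) (M i.val) y ∧
          pickU (𝒰 i) (M i.val) y = pickU (𝒰 i) (M i.val) x) →
      a i x ≤ dist x y / M i.val := by
    intro i x y hcond
    by_cases hx : PickP (𝒰 i) (M i.val) x
    · obtain ⟨⟨hmx, hnex⟩, hpx⟩ := pickU_spec hx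
      have hφy : phi (M i.val) (pickU (𝒰 i) (M i.val) x) y = 0 := by
        by_contra h0
        have hpos : 0 < phi (M i.val) (pickU (𝒰 i) (M i.val) x) y :=
          lt_of_le_of_ne (phi_nonneg _ _ _) (Ne.symm h0)
        exact hcond ⟨⟨_, ⟨hmx, hnex⟩, hpos⟩, hpick_eq i y _ hmx hnex hpos⟩
      have : a i x = phi (M i.val) (pickU (𝒰 i) (M i.val) x) x
          - phi (M i.val) (pickU (𝒰 i) (M i.val) x) y := by
        simp only [hadef]
        rw [coefA_of_pick hx, hφy, sub_zero]
      rw [this]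
      calc phi (M i.val) (pickU (𝒰 i) (M i.val) x) x
          - phi (M i.val) (pickU (𝒰 i) (M i.val) x) y
          ≤ |phi (M i.val) (pickU (𝒰 i) (M i.val) x) x
              - phi (M i.val) (pickU (𝒰 i) (M i.val) x) y| := le_abs_self _
        _ ≤ dist x y / M i.val := phi_lip (hM i.val) _ x y
    · simp only [hadef]
      rw [coefA_of_not_pick hx]
      positivity
  -- pairwise estimate
  have hw_diff : ∀ (i : Fin n) (x y : X),
      ‖w i x - w i y‖ ≤ 2 * dist x y / M i.val := by
    intro i x y
    have hMi := hM i.val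
    have hd0 : 0 ≤ dist x y := dist_nonneg
    by_cases hsame : PickP (𝒰 i) (M i.val) x ∧ PickP (𝒰 i) (M i.val) y ∧
        pickU (𝒰 i) (M i.val) x = pickU (𝒰 i) (M i.val) y
    · obtain ⟨hx, hy, hUV⟩ := hsame
      have hc : c i x = c i y := by simp only [hcdef, hUV]
      have hax : a i x = phi (M i.val) (pickU (𝒰 i) (M i.val) x) x := by
        simp only [hadef]; exact coefA_of_pick hx
      have hay : a i y = phi (M i.val) (pickU (𝒰 i) (M i.val) x) y := by
        simp only [hadef]
        rw [coefA_of_pick hy, hUV]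
      simp only [hwdef]
      rw [hc, lp_single_sub, lp_norm_single, hax, hay]
      calc |phi (M i.val) (pickU (𝒰 i) (M i.val) x) x
          - phi (M i.val) (pickU (𝒰 i) (M i.val) x) y| ≤ dist x y / M i.val :=
          phi_lip hMi _ x y
        _ ≤ 2 * dist x y / M i.val := by gcongr; linarith
    · -- bound each coefficient separately
      have hax : a i x ≤ dist x y / M i.val := by
        apply ha_le i x y
        intro ⟨hPy, heq⟩
        have hPx : PickP (𝒰 i) (M i.val) x := by
          by_contra hPx
          have h1 := pickU_of_not_pick hPx
          have h2 := (pickU_spec hPy).1.2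
          rw [heq, h1] at h2
          exact Set.not_nonempty_empty h2
        exact hsame ⟨hPx, hPy, heq.symm⟩
      have hay : a i y ≤ dist x y / M i.val := by
        rw [dist_comm]
        apply ha_le i y x
        intro ⟨hPx, heq⟩
        have hPy : PickP (𝒰 i) (M i.val) y := by
          by_contra hPy
          have h1 := pickU_of_not_pick hPy
          have h2 := (pickU_spec hPx).1.2
          rw [heq, h1] at h2
          exact Set.not_nonempty_empty h2
        exact hsame ⟨hPx, hPy, heq⟩
      have hanx : 0 ≤ a i x := by simp only [hadef]; exact coefA_nonneg _ _ _
      have hany : 0 ≤ a i y := by simp only [hadef]; exact coefA_nonneg _ _ _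
      calc ‖w i x - w i y‖ ≤ ‖w i x‖ + ‖w i y‖ := norm_sub_le _ _
        _ = |a i x| + |a i y| := by
            simp only [hwdef]; rw [lp_norm_single, lp_norm_single]
        _ = a i x + a i y := by rw [abs_of_nonneg hanx, abs_of_nonneg hany]
        _ ≤ dist x y / M i.val + dist x y / M i.val := add_le_add hax hay
        _ = 2 * dist x y / M i.val := by ring
  -- geometric series bound
  have hsum : ∑ i : Fin n, 2 * R / M i.val ≤ ε / 4 := by
    have hterm : ∀ j : ℕ, 2 * R / M j = 2 * R / C * (1 / 2 : ℝ) ^ j := by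
      intro j
      simp only [hMdef]
      rw [div_pow, one_pow]
      rw [div_mul_div_comm, mul_one]
    calc ∑ i : Fin n, 2 * R / M i.val
        = 2 * R / C * ∑ i : Fin n, (1 / 2 : ℝ) ^ i.val := by
          rw [Finset.mul_sum]
          exact Finset.sum_congr rfl fun i _ => hterm i.val
      _ = 2 * R / C * ∑ i ∈ Finset.range n, (1 / 2 : ℝ) ^ i := by
          rw [Fin.sum_univ_eq_sum_range]
      _ ≤ 2 * R / C * 2 := by
          have h2 := sum_geometric_two_le n
          have hpos : (0:ℝ) ≤ 2 * R / C := by positivity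
          nlinarith
      _ = ε / 4 := by
          rw [hCdef]
          field_simp
          ring
  -- the normalized vectors
  refine ⟨fun x => ‖v x‖⁻¹ • v x, ?_, ?_, ?_⟩
  · intro x
    have h0 : ‖v x‖ ≠ 0 := ne_of_gt (lt_of_lt_of_le one_pos (hv1 x))
    rw [norm_smul, norm_inv, norm_norm, inv_mul_cancel₀ h0]
  · intro x y hxy
    have hvd : ‖v x - v y‖ ≤ ε / 4 := by
      have h1 : v x - v y = ∑ i : Fin n, (w i x - w i y) := by
        simp only [hvdef]
        rw [Finset.sum_sub_distrib]
      rw [h1]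
      calc ‖∑ i : Fin n, (w i x - w i y)‖ ≤ ∑ i : Fin n, ‖w i x - w i y‖ :=
          norm_sum_le _ _
        _ ≤ ∑ i : Fin n, 2 * R / M i.val := by
            apply Finset.sum_le_sum
            intro i _
            calc ‖w i x - w i y‖ ≤ 2 * dist x y / M i.val := hw_diff i x y
              _ ≤ 2 * R / M i.val := by gcongr
        _ ≤ ε / 4 := hsum
    calc ‖‖v x‖⁻¹ • v x - ‖v y‖⁻¹ • v y‖ ≤ 2 * ‖v x - v y‖ :=
        norm_normalize_sub _ _ (hv1 x) (hv1 y)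
      _ ≤ 2 * (ε / 4) := by linarith
      _ ≤ ε := by linarith
  · refine ⟨max 1 (M n + D), lt_of_lt_of_le one_pos (le_max_left _ _), ?_⟩
    intro x y hy
    simp only [Function.mem_support] at hy
    have hvxy : (v x : ∀ _ : X, ℝ) y ≠ 0 := by
      intro h0
      apply hy
      rw [lp.coeFn_smul, Pi.smul_apply, h0, smul_zero]
    rw [hv_apply] at hvxy
    obtain ⟨i, _, hwi⟩ := Finset.exists_ne_zero_of_sum_ne_zero hvxy
    rw [hw_apply] at hwi
    by_cases hyc : y = c i x
    · rw [if_pos hyc] at hwi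
      have hP : PickP (𝒰 i) (M i.val) x := by
        by_contra hP
        apply hwi
        simp only [hadef]
        exact coefA_of_not_pick hP
      obtain ⟨⟨hmem, hne⟩, hpos⟩ := pickU_spec hP
      obtain ⟨u, hu, hdu⟩ := (Metric.infDist_lt_iff hne).1
        (infDist_lt_of_phi_pos (hM i.val) hpos)
      have hcm : c i x ∈ pickU (𝒰 i) (M i.val) x := by
        simp only [hcdef]
        exact ctr_mem hne
      have hD : dist u (c i x) ≤ D := hbound i _ hmem u hu _ hcm
      have hMn : M i.val ≤ M n := by
        simp only [hMdef]
        gcongr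
        · linarith
        · exact i.isLt.le
      have : dist x y ≤ M n + D := by
        rw [hyc]
        calc dist x (c i x) ≤ dist x u + dist u (c i x) := dist_triangle _ _ _
          _ ≤ M i.val + D := add_le_add hdu.le hD
          _ ≤ M n + D := by linarith
      rw [mem_closedBall, dist_comm]
      exact le_trans this (le_max_right _ _)
    · rw [if_neg hyc] at hwi
      exact absurd rfl hwi
end

section
/- Let X be a metric space and suppose there is a family 𝒴 of metric spaces with uniform asymptotic property C such that for every sequence R of positive reals, X admits a uniform R-decomposition over 𝒴 (i.e., there exists k and Rᵢ-disjoint subfamilies 𝒰₁,…,𝒰ₖ ⊆ 𝒴 of subspaces of X with ⋃ᵢ𝒰ᵢ covering X). Then X has asymptotic property C. -/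
/-- A family `𝒴` of subsets of `X` has uniform asymptotic property C if for
every positive sequence `S` there are `k` and a uniform bound `D` such that
every `Y ∈ 𝒴` is covered by `k` families of `Sⱼ`-disjoint subsets of `Y` of
diameter at most `D`. -/
def UniformAPC {X : Type*} [MetricSpace X] (𝒴 : Set (Set X)) : Prop :=
  ∀ S : ℕ → ℝ, (∀ i, 0 < S i) →
    ∃ (k : ℕ) (D : ℝ), ∀ Y ∈ 𝒴, ∃ 𝒰 : Fin k → Set (Set X),
      (∀ j : Fin k, RDisjoint (S j.val) (𝒰 j)) ∧
      (∀ j, ∀ U ∈ 𝒰 j, U ⊆ Y ∧ ∀ x ∈ U, ∀ y ∈ U, dist x y ≤ D) ∧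
      (∀ x ∈ Y, ∃ j, ∃ U ∈ 𝒰 j, x ∈ U)

/-- Decomposition theorem for asymptotic property C: if `X` admits, for every
positive sequence `R`, a uniform `R`-decomposition over a fixed family `𝒴`
with uniform asymptotic property C, then `X` has asymptotic property C. -/
theorem apc_decomposition {X : Type*} [MetricSpace X]
    (𝒴 : Set (Set X)) (h𝒴 : UniformAPC 𝒴)
    (hdec : ∀ R : ℕ → ℝ, (∀ i, 0 < R i) →
      ∃ (k : ℕ) (𝒰 : Fin k → Set (Set X)),
        (∀ i, 𝒰 i ⊆ 𝒴) ∧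
        (∀ i : Fin k, RDisjoint (R i.val) (𝒰 i)) ∧
        (∀ x : X, ∃ i, ∃ U ∈ 𝒰 i, x ∈ U)) :
    APC X := by
  intro R hR
  -- monotone majorant of R
  set R' : ℕ → ℝ := fun e =>
    (Finset.range (e+1)).sup' (Finset.nonempty_range_iff.mpr (Nat.succ_ne_zero e)) R with hR'def
  have hle : ∀ i e, i ≤ e → R i ≤ R' e := fun i e h =>
    Finset.le_sup' R (Finset.mem_range.mpr (Nat.lt_succ_of_le h))
  have hR'mono : Monotone R' := by
    intro a b hab
    apply Finset.sup'_le
    intro i hi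
    exact hle i b (le_trans (Nat.lt_succ_iff.mp (Finset.mem_range.mp hi)) hab)
  have hR'pos : ∀ e, 0 < R' e := fun e => lt_of_lt_of_le (hR e) (hle e e le_rfl)
  -- apply UniformAPC with tail sequences starting at an arbitrary offset K0
  have hS : ∀ K0 : ℕ, ∃ kD : ℕ × ℝ, ∀ Y ∈ 𝒴, ∃ 𝒰 : Fin kD.1 → Set (Set X),
      (∀ j : Fin kD.1, RDisjoint (R' (K0 + j.val)) (𝒰 j)) ∧
      (∀ j, ∀ U ∈ 𝒰 j, U ⊆ Y ∧ ∀ x ∈ U, ∀ y ∈ U, dist x y ≤ kD.2) ∧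
      (∀ x ∈ Y, ∃ j, ∃ U ∈ 𝒰 j, x ∈ U) := by
    intro K0
    obtain ⟨k, D, h⟩ := h𝒴 (fun j => R' (K0 + j)) (fun j => hR'pos _)
    exact ⟨(k, D), h⟩
  choose kD hkD using hS
  -- the cumulative offsets
  set K : ℕ → ℕ := fun n => Nat.rec 0 (fun _ Ki => Ki + (kD Ki).1) n with hKdef
  have hKsucc : ∀ i, K (i+1) = K i + (kD (K i)).1 := fun i => rfl
  have hKmono : Monotone K :=
    monotone_nat_of_le_succ (fun i => by rw [hKsucc]; exact Nat.le_add_right _ _)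
  have huniq : ∀ (i i' e : ℕ), K i ≤ e → e < K (i+1) → K i' ≤ e → e < K (i'+1) → i = i' := by
    intro i i' e h1 h2 h3 h4
    rcases lt_trichotomy i i' with h | h | h
    · exact absurd h3 (not_le.mpr (lt_of_lt_of_le h2 (hKmono h)))
    · exact h
    · exact absurd h1 (not_le.mpr (lt_of_lt_of_le h4 (hKmono h)))
  choose 𝒞 h𝒞d h𝒞b h𝒞c using hkD
  -- the decomposition at scales R' (K (i+1))
  obtain ⟨m, 𝒱, hsub, hTdisj, hVcov⟩ := hdec (fun i => R' (K (i+1))) (fun i => hR'pos _)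
  refine ⟨K m, fun e => {U | ∃ i, ∃ hi : i < m, ∃ j, ∃ hj : j < (kD (K i)).1,
      e.val = K i + j ∧ ∃ Y, ∃ hY : Y ∈ 𝒱 ⟨i, hi⟩,
      U ∈ 𝒞 (K i) Y (hsub ⟨i, hi⟩ hY) ⟨j, hj⟩},
    ∑ i ∈ Finset.range m, |(kD (K i)).2|, ?_, ?_, ?_⟩
  · -- disjointness
    rintro e U ⟨i, hi, j, hj, he, Y, hY, hUY⟩ V ⟨i', hi', j', hj', he', Y', hY', hVY⟩ hUV x hx y hy
    have h1 : K i ≤ e.val := he ▸ Nat.le_add_right _ _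
    have h2 : e.val < K (i+1) := by rw [hKsucc]; omega
    have h1' : K i' ≤ e.val := he' ▸ Nat.le_add_right _ _
    have h2' : e.val < K (i'+1) := by rw [hKsucc]; omega
    have hii : i = i' := huniq i i' e.val h1 h2 h1' h2'
    subst hii
    have hjj : j = j' := by omega
    subst hjj
    have heR : R e.val ≤ R' e.val := hle _ _ le_rfl
    by_cases hYY : Y = Y'
    · subst hYY
      have := h𝒞d (K i) Y (hsub ⟨i, hi⟩ hY) ⟨j, hj⟩ U hUY V hVY hUV x hx y hy
      have he2 : R e.val ≤ R' (K i + j) := he ▸ heR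
      linarith
    · have hxY : x ∈ Y := (h𝒞b (K i) Y (hsub ⟨i, hi⟩ hY) ⟨j, hj⟩ U hUY).1 hx
      have hyY' : y ∈ Y' := (h𝒞b (K i) Y' (hsub ⟨i, hi⟩ hY') ⟨j, hj⟩ V hVY).1 hy
      have := hTdisj ⟨i, hi⟩ Y hY Y' hY' hYY x hxY y hyY'
      have : R' (K (i+1)) < dist x y := this
      have he2 : R e.val ≤ R' (K (i+1)) := le_trans heR (hR'mono (le_of_lt h2))
      linarith
  · -- coverage
    intro x
    obtain ⟨i, Y, hY, hxY⟩ := hVcov x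
    obtain ⟨j, U, hU, hxU⟩ := h𝒞c (K i.val) Y (hsub i hY) x hxY
    have hlt : K i.val + j.val < K m := by
      have h1 : K (i.val + 1) ≤ K m := hKmono (Nat.succ_le_of_lt i.isLt)
      have h2 := hKsucc i.val
      have h3 := j.isLt
      omega
    exact ⟨⟨K i.val + j.val, hlt⟩, U, ⟨i.val, i.isLt, j.val, j.isLt, rfl, Y, hY, hU⟩, hxU⟩
  · -- uniform bound on diameters
    rintro e U ⟨i, hi, j, hj, he, Y, hY, hUY⟩ x hx y hy
    have h1 := (h𝒞b (K i) Y (hsub ⟨i, hi⟩ hY) ⟨j, hj⟩ U hUY).2 x hx y hy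
    calc dist x y ≤ (kD (K i)).2 := h1
      _ ≤ |(kD (K i)).2| := le_abs_self _
      _ ≤ ∑ i ∈ Finset.range m, |(kD (K i)).2| :=
          Finset.single_le_sum (f := fun i => |(kD (K i)).2|) (fun i _ => abs_nonneg _) (Finset.mem_range.mpr hi)
end

section
/- If two metric spaces X and Y are coarsely equivalent, then X has asymptotic property C if and only if Y has asymptotic property C. -/
open Filter

/-- `X` and `Y` are coarsely equivalent: there is a coarse embedding
`f : X → Y` whose image is coarsely dense in `Y`. -/
def CoarselyEquivalent (X Y : Type*) [MetricSpace X] [MetricSpace Y] : Prop :=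
  ∃ (f : X → Y) (ρ₁ ρ₂ : ℝ → ℝ) (C : ℝ),
    Monotone ρ₁ ∧ Monotone ρ₂ ∧ Tendsto ρ₁ atTop atTop ∧
    (∀ x x' : X, ρ₁ (dist x x') ≤ dist (f x) (f x')) ∧
    (∀ x x' : X, dist (f x) (f x') ≤ ρ₂ (dist x x')) ∧
    0 < C ∧ (∀ y : Y, ∃ x : X, dist (f x) y < C)

lemma apc_pullback {X Y : Type*} [MetricSpace X] [MetricSpace Y]
    (f : X → Y) (ρ₁ ρ₂ : ℝ → ℝ) (hm1 : Monotone ρ₁) (hm2 : Monotone ρ₂)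
    (ht : Tendsto ρ₁ atTop atTop)
    (hl : ∀ x x' : X, ρ₁ (dist x x') ≤ dist (f x) (f x'))
    (hu : ∀ x x' : X, dist (f x) (f x') ≤ ρ₂ (dist x x'))
    (hY : APC Y) : APC X := by
  intro R hR
  obtain ⟨n, 𝒱, D, hdisj, hcov, hbd⟩ := hY (fun i => max (ρ₂ (R i)) 1)
    (fun i => lt_of_lt_of_le one_pos (le_max_right _ _))
  obtain ⟨T, hT⟩ := eventually_atTop.mp (tendsto_atTop.mp ht (D + 1))
  refine ⟨n, fun i => (fun V => f ⁻¹' V) '' 𝒱 i, max T 0, ?_, ?_, ?_⟩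
  · rintro i U ⟨V₁, hV₁, rfl⟩ V ⟨V₂, hV₂, rfl⟩ hne x hx y hy
    have hV12 : V₁ ≠ V₂ := by rintro rfl; exact hne rfl
    have h1 := hdisj i V₁ hV₁ V₂ hV₂ hV12 (f x) hx (f y) hy
    by_contra hle
    push_neg at hle
    have h2 : dist (f x) (f y) ≤ ρ₂ (R i.val) := (hu x y).trans (hm2 hle)
    have h3 : ρ₂ (R i.val) ≤ max (ρ₂ (R i.val)) 1 := le_max_left _ _
    linarith
  · intro x
    obtain ⟨i, V, hV, hx⟩ := hcov (f x)
    exact ⟨i, f ⁻¹' V, ⟨V, hV, rfl⟩, hx⟩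
  · rintro i U ⟨V, hV, rfl⟩ x hx y hy
    have h1 := hbd i V hV (f x) hx (f y) hy
    by_contra hgt
    push_neg at hgt
    have h2 : T ≤ dist x y := le_of_lt (lt_of_le_of_lt (le_max_left T 0) hgt)
    have h3 := hT (dist x y) h2
    have h4 := hl x y
    linarith

lemma apc_pushforward {X Y : Type*} [MetricSpace X] [MetricSpace Y]
    (f : X → Y) (ρ₁ ρ₂ : ℝ → ℝ) (C : ℝ) (hm1 : Monotone ρ₁) (hm2 : Monotone ρ₂)
    (ht : Tendsto ρ₁ atTop atTop)
    (hl : ∀ x x' : X, ρ₁ (dist x x') ≤ dist (f x) (f x'))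
    (hu : ∀ x x' : X, dist (f x) (f x') ≤ ρ₂ (dist x x'))
    (hC : 0 < C) (hdense : ∀ y : Y, ∃ x : X, dist (f x) y < C)
    (hX : APC X) : APC Y := by
  intro R hR
  choose S hS using fun i : ℕ =>
    eventually_atTop.mp (tendsto_atTop.mp ht (R i + 2 * C + 1))
  obtain ⟨n, 𝒰, D, hdisj, hcov, hbd⟩ := hX (fun i => max (S i) 1)
    (fun i => lt_of_lt_of_le one_pos (le_max_right _ _))
  refine ⟨n, fun i => (fun U => {y : Y | ∃ x ∈ U, dist (f x) y < C}) '' 𝒰 i,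
    ρ₂ D + 2 * C, ?_, ?_, ?_⟩
  · rintro i U ⟨U₁, hU₁, rfl⟩ V ⟨U₂, hU₂, rfl⟩ hne y hy y' hy'
    have hU12 : U₁ ≠ U₂ := by rintro rfl; exact hne rfl
    obtain ⟨x, hx, hxy⟩ := hy
    obtain ⟨x', hx', hx'y⟩ := hy'
    have h1 := hdisj i U₁ hU₁ U₂ hU₂ hU12 x hx x' hx'
    have h2 : S i.val ≤ dist x x' :=
      le_of_lt (lt_of_le_of_lt (le_max_left _ _) h1)
    have h3 := hS i.val (dist x x') h2
    have h4 := hl x x'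
    have h5 : dist (f x) (f x') ≤ dist (f x) y + dist y y' + dist y' (f x') :=
      dist_triangle4 _ _ _ _
    have h6 : dist y' (f x') = dist (f x') y' := dist_comm _ _
    linarith
  · intro y
    obtain ⟨x, hx⟩ := hdense y
    obtain ⟨i, U, hU, hxU⟩ := hcov x
    exact ⟨i, _, ⟨U, hU, rfl⟩, x, hxU, hx⟩
  · rintro i U ⟨U₀, hU₀, rfl⟩ y hy y' hy'
    obtain ⟨x, hx, hxy⟩ := hy
    obtain ⟨x', hx', hx'y⟩ := hy'
    have h1 := hbd i U₀ hU₀ x hx x' hx'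
    have h2 : dist (f x) (f x') ≤ ρ₂ D := (hu x x').trans (hm2 h1)
    have h3 : dist y y' ≤ dist y (f x) + dist (f x) (f x') + dist (f x') y' :=
      dist_triangle4 _ _ _ _
    have h4 : dist y (f x) = dist (f x) y := dist_comm _ _
    have h5 : dist (f x') y' ≤ C := by
      by_contra hgt
      push_neg at hgt
      linarith [dist_comm (f x') y' ▸ hx'y]
    linarith

/-- Asymptotic property C is a coarse invariant. -/
theorem apc_coarse_invariant {X Y : Type*} [MetricSpace X] [MetricSpace Y]
    (h : CoarselyEquivalent X Y) : APC X ↔ APC Y := by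
  obtain ⟨f, ρ₁, ρ₂, C, hm1, hm2, ht, hl, hu, hC, hdense⟩ := h
  exact ⟨apc_pushforward f ρ₁ ρ₂ C hm1 hm2 ht hl hu hC hdense,
    apc_pullback f ρ₁ ρ₂ hm1 hm2 ht hl hu⟩
end
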